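/- Let B and B' be unital associative algebras over ℂ with B' having a countable basis, let M' be a simple B'-module, and let M be a B-module. Then M ⊗ M' is a simple (B ⊗ B')-module if and only if M is a simple B-module. -/

import Mathlib

open TensorProduct

open Polynomial Cardinal

section Dixmier

variable {D : Type*} [Ring D] [Algebra ℂ D] [Nontrivial D]

omit [Algebra ℂ D] [Nontrivial D] in
lemma dix_aux_nzd (hdr : ∀ x : D, x ≠ 0 → IsUnit x) {x y : D} (h : x * y = 0) :
    x = 0 ∨ y = 0 := by
  by_contra hc
  push_neg at hc
  obtain ⟨v, hv⟩ := hdr y hc.2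
  have : x * y * ↑v⁻¹ = 0 := by rw [h, zero_mul]
  rw [← hv, mul_assoc, Units.mul_inv, mul_one] at this
  exact hc.1 this

lemma dix_aux_prod (hdr : ∀ x : D, x ≠ 0 → IsUnit x) (φ : D) (m : Multiset ℂ)
    (h : Polynomial.aeval φ ((m.map fun a => X - C a).prod) = 0) :
    ∃ a ∈ m, φ = algebraMap ℂ D a := by
  induction m using Multiset.induction_on with
  | empty => simp at h
  | cons a m ih =>
    rw [Multiset.map_cons, Multiset.prod_cons, map_mul] at h
    rcases dix_aux_nzd hdr h with h1 | h2
    · refine ⟨a, Multiset.mem_cons_self _ _, ?_⟩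
      have : φ - algebraMap ℂ D a = 0 := by simpa using h1
      exact sub_eq_zero.mp this
    · obtain ⟨b, hb, hφ⟩ := ih h2
      exact ⟨b, Multiset.mem_cons_of_mem hb, hφ⟩

lemma dix_transcendental (hdr : ∀ x : D, x ≠ 0 → IsUnit x) (φ : D)
    (hφ : ∀ c : ℂ, φ ≠ algebraMap ℂ D c) (q : ℂ[X]) (hq : Polynomial.aeval φ q = 0) :
    q = 0 := by
  by_contra h0
  have hsp := (IsAlgClosed.splits q).eq_prod_roots
  rw [hsp, map_mul, aeval_C] at hq
  have h1 : (algebraMap ℂ D) q.leadingCoeff ≠ 0 := fun h =>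
    (Polynomial.leadingCoeff_ne_zero.2 h0)
      ((algebraMap ℂ D).injective (h.trans (map_zero _).symm))
  have h2 := (dix_aux_nzd hdr hq).resolve_left h1
  obtain ⟨a, _, ha⟩ := dix_aux_prod hdr φ _ h2
  exact hφ a ha

lemma dixmier (hdr : ∀ x : D, x ≠ 0 → IsUnit x)
    (hrank : Module.rank ℂ D ≤ ℵ₀) (φ : D) :
    ∃ c : ℂ, φ = algebraMap ℂ D c := by
  by_contra hc
  push_neg at hc
  have hu : ∀ c : ℂ, φ - algebraMap ℂ D c ≠ 0 := fun c h => hc c (sub_eq_zero.mp h)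
  set v : ℂ → D := fun c => ↑((hdr _ (hu c)).unit⁻¹) with hv
  have hli : LinearIndependent ℂ v := by
    rw [linearIndependent_iff']
    intro s g hsum i hi
    set q : ℂ[X] := ∑ c ∈ s, Polynomial.C (g c) * ∏ c' ∈ s.erase c, (X - C c') with hqdef
    have key : ∀ c ∈ s, (g c • v c) * Polynomial.aeval φ (∏ c' ∈ s, (X - C c'))
        = Polynomial.aeval φ (Polynomial.C (g c) * ∏ c' ∈ s.erase c, (X - C c')) := by
      intro c hcs
      rw [← Finset.mul_prod_erase s _ hcs, map_mul, map_mul, aeval_C, smul_mul_assoc,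
        ← mul_assoc]
      have h2 : Polynomial.aeval φ (X - C c) = φ - algebraMap ℂ D c := by
        simp [map_sub]
      rw [h2, hv]
      rw [IsUnit.val_inv_mul, one_mul, Algebra.smul_def]
    have hq0 : Polynomial.aeval φ q = 0 := by
      rw [hqdef, map_sum, ← Finset.sum_congr rfl key, ← Finset.sum_mul, hsum, zero_mul]
    have hqz : q = 0 := dix_transcendental hdr φ hc q hq0
    have hev := congrArg (Polynomial.eval i) hqz
    rw [hqdef] at hev
    simp only [Polynomial.eval_finset_sum, eval_mul, eval_C, Polynomial.eval_prod, eval_sub,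
      eval_X, Polynomial.eval_zero] at hev
    rw [Finset.sum_eq_single_of_mem i hi (fun c hcs hci => by
      rw [Finset.prod_eq_zero (Finset.mem_erase.2 ⟨hci.symm, hi⟩) (sub_self i), mul_zero])] at hev
    have hne : (∏ c' ∈ s.erase i, (i - c')) ≠ 0 :=
      Finset.prod_ne_zero_iff.2 fun c' hc' => sub_ne_zero.2 (Ne.symm (Finset.mem_erase.1 hc').1)
    exact (mul_eq_zero.1 hev).resolve_right hne
  have h1 := hli.cardinal_lift_le_rank
  have h2 : Cardinal.lift.{0} (Module.rank ℂ D) ≤ ℵ₀ := Cardinal.lift_le_aleph0.2 hrank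
  have h3 : (#ℂ) ≤ ℵ₀ := Cardinal.lift_le_aleph0.1 (h1.trans h2)
  rw [mk_complex] at h3
  exact Cardinal.aleph0_lt_continuum.not_ge h3

end Dixmier

section Density

variable {A N : Type*} [Ring A] [Algebra ℂ A] [AddCommGroup N] [Module ℂ N] [Module A N]
  [IsScalarTower ℂ A N] [SMulCommClass A ℂ N] [IsSimpleModule A N]

lemma density (hcomm : ∀ φ : Module.End A N, ∃ c : ℂ, ∀ n : N, φ n = c • n)
    (s : Finset N) : ∀ x : N, x ∉ Submodule.span ℂ (s : Set N) →
      ∃ a : A, (∀ y ∈ s, a • y = 0) ∧ a • x ≠ 0 := by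
  classical
  induction s using Finset.induction_on with
  | empty =>
    intro x hx
    refine ⟨1, by simp, ?_⟩
    rw [one_smul]
    simpa using hx
  | @insert y t hy ih =>
    intro x hx
    rw [Finset.coe_insert] at hx
    by_cases hyt : y ∈ Submodule.span ℂ (t : Set N)
    · rw [Submodule.span_insert_eq_span hyt] at hx
      obtain ⟨a, h1, h2⟩ := ih x hx
      refine ⟨a, ?_, h2⟩
      intro z hz
      rcases Finset.mem_insert.1 hz with rfl | hzt
      · have hker : Submodule.span ℂ (t : Set N) ≤
            LinearMap.ker (DistribMulAction.toLinearMap ℂ N a) := by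
          rw [Submodule.span_le]
          intro w hw
          exact h1 w hw
        exact hker hyt
      · exact h1 z hzt
    · by_contra hcon
      push_neg at hcon
      have hcon' : ∀ a : A, (∀ z ∈ t, a • z = 0) → a • y = 0 → a • x = 0 := by
        intro a ht hay
        refine hcon a ?_
        intro z hz
        rcases Finset.mem_insert.1 hz with rfl | hzt
        · exact hay
        · exact ht z hzt
      -- the set of a • y for a killing t is a nonzero A-submodule, hence all of N
      set S : Submodule A N :=
        { carrier := {v | ∃ a : A, (∀ z ∈ t, a • z = 0) ∧ a • y = v}
          add_mem' := by
            rintro v w ⟨a, ha, rfl⟩ ⟨a', ha', rfl⟩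
            exact ⟨a + a', fun z hz => by rw [add_smul, ha z hz, ha' z hz, add_zero],
              add_smul a a' y⟩
          zero_mem' := ⟨0, fun z _ => zero_smul A z, zero_smul A y⟩
          smul_mem' := by
            rintro b v ⟨a, ha, rfl⟩
            exact ⟨b * a, fun z hz => by rw [mul_smul, ha z hz, smul_zero], mul_smul b a y⟩ }
        with hS
      have hSne : S ≠ ⊥ := by
        obtain ⟨a, ha, hay⟩ := ih y hyt
        intro hbot
        have : a • y ∈ S := ⟨a, ha, rfl⟩
        rw [hbot, Submodule.mem_bot] at this
        exact hay this
      have hStop : S = ⊤ := (eq_bot_or_eq_top S).resolve_left hSne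
      have hsurj : ∀ v : N, ∃ a : A, (∀ z ∈ t, a • z = 0) ∧ a • y = v := by
        intro v
        have : v ∈ S := by rw [hStop]; trivial
        exact this
      have hwd : ∀ a a' : A, (∀ z ∈ t, a • z = 0) → (∀ z ∈ t, a' • z = 0) →
          a • y = a' • y → a • x = a' • x := by
        intro a a' ha ha' hyy
        have h1 : (a - a') • x = 0 := by
          refine hcon' (a - a') (fun z hz => by rw [sub_smul, ha z hz, ha' z hz, sub_zero]) ?_
          rw [sub_smul, hyy, sub_self]
        rw [sub_smul, sub_eq_zero] at h1
        exact h1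
      choose ch hch1 hch2 using hsurj
      have hf : ∀ (a : A), (∀ z ∈ t, a • z = 0) → ∀ v : N, a • y = v → ch v • x = a • x :=
        fun a ha v hv => hwd (ch v) a (hch1 v) ha (by rw [hch2 v, hv])
      set φ : Module.End A N :=
        { toFun := fun v => ch v • x
          map_add' := by
            intro v w
            show ch (v + w) • x = ch v • x + ch w • x
            rw [hf (ch v + ch w)
              (fun z hz => by rw [add_smul, hch1 v z hz, hch1 w z hz, add_zero])
              (v + w) (by rw [add_smul, hch2 v, hch2 w]), add_smul]
          map_smul' := by
            intro b v
            show ch (b • v) • x = b • (ch v • x)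
            rw [hf (b * ch v)
              (fun z hz => by rw [mul_smul, hch1 v z hz, smul_zero])
              (b • v) (by rw [mul_smul, hch2 v]), mul_smul] } with hφ
      obtain ⟨c, hc⟩ := hcomm φ
      have hkill : ∀ a : A, (∀ z ∈ t, a • z = 0) → a • (x - c • y) = 0 := by
        intro a ha
        have h1 : φ (a • y) = a • x := hf a ha (a • y) rfl
        have h2 : φ (a • y) = c • (a • y) := hc (a • y)
        rw [smul_sub, smul_comm a c y, ← h2, h1, sub_self]
      have hmem : x - c • y ∈ Submodule.span ℂ (t : Set N) := by
        by_contra hns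
        obtain ⟨a, ha, hax⟩ := ih _ hns
        exact hax (hkill a ha)
      exact hx (Submodule.mem_span_insert.2 ⟨c, x - c • y, hmem, by abel⟩)

end Density

lemma tmul_ne_zero' {V W : Type*} [AddCommGroup V] [Module ℂ V] [AddCommGroup W] [Module ℂ W]
    {v : V} {w : W} (hv : v ≠ 0) (hw : w ≠ 0) : v ⊗ₜ[ℂ] w ≠ 0 := by
  obtain ⟨f, hf⟩ : ∃ f : Module.Dual ℂ V, f v ≠ 0 := by
    by_contra h
    push_neg at h
    exact hv ((Module.forall_dual_apply_eq_zero_iff ℂ v).1 fun φ => h φ)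
  obtain ⟨g, hg⟩ : ∃ g : Module.Dual ℂ W, g w ≠ 0 := by
    by_contra h
    push_neg at h
    exact hw ((Module.forall_dual_apply_eq_zero_iff ℂ w).1 fun φ => h φ)
  intro h0
  have := congrArg (fun z => (TensorProduct.lid ℂ ℂ) ((TensorProduct.map f g) z)) h0
  simp only [map_tmul, lid_tmul, map_zero, smul_eq_mul] at this
  exact mul_ne_zero hf hg this

lemma rep_lemma {M M' κ : Type*} [AddCommGroup M] [Module ℂ M] [AddCommGroup M'] [Module ℂ M']
    (bas' : Module.Basis κ ℂ M') (z : M ⊗[ℂ] M') :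
    ∃ f : κ →₀ M, z = f.sum fun i m => m ⊗ₜ[ℂ] bas' i := by
  classical
  induction z using TensorProduct.induction_on with
  | zero => exact ⟨0, by simp⟩
  | tmul m n =>
    refine ⟨(bas'.repr n).mapRange (fun c => c • m) (by simp), ?_⟩
    rw [Finsupp.sum_mapRange_index (h := fun i m => m ⊗ₜ[ℂ] bas' i) (by simp)]
    conv_lhs => rw [← bas'.linearCombination_repr n]
    rw [Finsupp.linearCombination_apply, Finsupp.sum, Finsupp.sum, TensorProduct.tmul_sum]
    exact Finset.sum_congr rfl fun i _ => (TensorProduct.smul_tmul _ _ _).symm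
  | add u v hu hv =>
    obtain ⟨f, hf⟩ := hu
    obtain ⟨g, hg⟩ := hv
    refine ⟨f + g, ?_⟩
    rw [Finsupp.sum_add_index' (by simp) (fun i m m' => TensorProduct.add_tmul m m' (bas' i)),
      hf, hg]



/-- Let `B, B'` be unital associative `ℂ`-algebras with `B'` having a countable basis, let
`M'` be a simple `B'`-module and `M` a `B`-module.  Then `M ⊗ M'` is a simple
`(B ⊗ B')`-module (i.e. it is nonzero and its only `ℂ`-subspaces invariant under the
actions of `B` on the first factor and `B'` on the second are `⊥` and `⊤`) if and only
if `M` is a simple `B`-module. -/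
theorem stmt5 (B B' M M' : Type*) [Ring B] [Algebra ℂ B] [Ring B'] [Algebra ℂ B']
    [AddCommGroup M] [Module ℂ M] [Module B M]
    [IsScalarTower ℂ B M] [SMulCommClass B ℂ M]
    [AddCommGroup M'] [Module ℂ M'] [Module B' M']
    [IsScalarTower ℂ B' M'] [SMulCommClass B' ℂ M']
    (ι : Type*) [Countable ι] (bas : Module.Basis ι ℂ B')
    [IsSimpleModule B' M'] :
    (Nontrivial (M ⊗[ℂ] M') ∧
      ∀ P : Submodule ℂ (M ⊗[ℂ] M'),
        (∀ (b : B), ∀ z ∈ P,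
          LinearMap.rTensor M' (DistribMulAction.toLinearMap ℂ M b) z ∈ P) →
        (∀ (b' : B'), ∀ z ∈ P,
          LinearMap.lTensor M (DistribMulAction.toLinearMap ℂ M' b') z ∈ P) →
        P = ⊥ ∨ P = ⊤)
      ↔ IsSimpleModule B M := by
  classical
  have hM'nt : Nontrivial M' := IsSimpleModule.nontrivial B' M'
  obtain ⟨n₀, hn₀⟩ := exists_ne (0 : M')
  constructor
  · rintro ⟨hnt, hP⟩
    have hMnt : Nontrivial M := by
      by_contra h
      rw [not_nontrivial_iff_subsingleton] at h
      have hsub : Subsingleton (M ⊗[ℂ] M') := by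
        constructor
        intro a b
        have hz : ∀ z : M ⊗[ℂ] M', z = 0 := by
          intro z
          induction z using TensorProduct.induction_on with
          | zero => rfl
          | tmul m n => rw [Subsingleton.elim m 0, TensorProduct.zero_tmul]
          | add u v hu hv => rw [hu, hv, add_zero]
        rw [hz a, hz b]
      exact not_subsingleton_iff_nontrivial.2 hnt hsub
    have key : ∀ N : Submodule B M, N = ⊥ ∨ N = ⊤ := by
      intro N
      set S : Set (M ⊗[ℂ] M') := {z | ∃ m ∈ N, ∃ n : M', z = m ⊗ₜ[ℂ] n} with hSdef
      set P := Submodule.span ℂ S with hPdef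
      have hinv1 : ∀ (b : B), ∀ z ∈ P,
          LinearMap.rTensor M' (DistribMulAction.toLinearMap ℂ M b) z ∈ P := by
        intro b z hz
        have hsub : S ⊆
            (P.comap (LinearMap.rTensor M' (DistribMulAction.toLinearMap ℂ M b))) := by
          rintro _ ⟨m, hm, n, rfl⟩
          simp only [SetLike.mem_coe, Submodule.mem_comap, LinearMap.rTensor_tmul]
          exact Submodule.subset_span ⟨b • m, N.smul_mem b hm, n, rfl⟩
        exact (Submodule.span_le.2 hsub) hz
      have hinv2 : ∀ (b' : B'), ∀ z ∈ P,
          LinearMap.lTensor M (DistribMulAction.toLinearMap ℂ M' b') z ∈ P := by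
        intro b' z hz
        have hsub : S ⊆
            (P.comap (LinearMap.lTensor M (DistribMulAction.toLinearMap ℂ M' b'))) := by
          rintro _ ⟨m, hm, n, rfl⟩
          simp only [SetLike.mem_coe, Submodule.mem_comap, LinearMap.lTensor_tmul]
          exact Submodule.subset_span ⟨m, hm, b' • n, rfl⟩
        exact (Submodule.span_le.2 hsub) hz
      rcases hP P hinv1 hinv2 with hbot | htop
      · left
        rw [eq_bot_iff]
        intro m hm
        by_contra hm0
        have hmem : m ⊗ₜ[ℂ] n₀ ∈ P := Submodule.subset_span ⟨m, hm, n₀, rfl⟩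
        rw [hbot, Submodule.mem_bot] at hmem
        exact tmul_ne_zero' hm0 hn₀ hmem
      · right
        rw [eq_top_iff]
        intro m _
        by_contra hm
        set q := (Submodule.restrictScalars ℂ N).mkQ with hqdef
        have hker : P ≤ LinearMap.ker (LinearMap.rTensor M' q) := by
          rw [hPdef, Submodule.span_le]
          rintro _ ⟨m', hm', n, rfl⟩
          simp only [SetLike.mem_coe, LinearMap.mem_ker, LinearMap.rTensor_tmul]
          have hq0 : q m' = 0 := by
            rw [hqdef, Submodule.mkQ_apply, Submodule.Quotient.mk_eq_zero]
            exact hm'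
          rw [hq0, TensorProduct.zero_tmul]
        have h1 : LinearMap.rTensor M' q (m ⊗ₜ[ℂ] n₀) = 0 := by
          have : (m ⊗ₜ[ℂ] n₀) ∈ P := htop ▸ Submodule.mem_top
          simpa [LinearMap.mem_ker] using hker this
        rw [LinearMap.rTensor_tmul] at h1
        have hqm : q m ≠ 0 := by
          rw [hqdef, Submodule.mkQ_apply, Ne, Submodule.Quotient.mk_eq_zero]
          exact hm
        exact tmul_ne_zero' hqm hn₀ h1
    have hntS : Nontrivial (Submodule B M) := by
      obtain ⟨m₀, hm₀⟩ := exists_ne (0 : M)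
      exact ⟨⊥, ⊤, fun h => hm₀ (by
        have : m₀ ∈ (⊥ : Submodule B M) := h ▸ Submodule.mem_top
        simpa using this)⟩
    exact (isSimpleModule_iff _ _).2 ⟨key⟩
  · intro hM
    have hMnt : Nontrivial M := IsSimpleModule.nontrivial B M
    obtain ⟨m₀, hm₀⟩ := exists_ne (0 : M)
    refine ⟨⟨m₀ ⊗ₜ[ℂ] n₀, 0, tmul_ne_zero' hm₀ hn₀⟩, ?_⟩
    intro P hinv1 hinv2
    rcases eq_or_ne P ⊥ with hbot | hne
    · exact Or.inl hbot
    right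
    obtain ⟨z, hzP, hz0⟩ := (Submodule.ne_bot_iff P).1 hne
    -- the commutant of the `B'`-action on `M'` consists of scalars
    haveI hntEnd : Nontrivial (Module.End B' M') := by
      refine ⟨1, 0, fun h => hn₀ ?_⟩
      have := LinearMap.congr_fun h n₀
      simpa using this
    have hdr : ∀ φ : Module.End B' M', φ ≠ 0 → IsUnit φ := fun φ h =>
      (Module.End.isUnit_iff φ).2 (LinearMap.bijective_of_ne_zero h)
    have hB'rank : Module.rank ℂ B' ≤ ℵ₀ := by
      have h := bas.mk_eq_rank
      have hι : (#ι) ≤ ℵ₀ := Cardinal.mk_le_aleph0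
      exact Cardinal.lift_le_aleph0.1 (h ▸ Cardinal.lift_le_aleph0.2 hι)
    have hM'rank : Module.rank ℂ M' ≤ ℵ₀ := by
      have hsurj : Function.Surjective
          ((LinearMap.toSpanSingleton B' M' n₀).restrictScalars ℂ) := by
        intro n
        obtain ⟨b', hb'⟩ := IsSimpleModule.toSpanSingleton_surjective B' hn₀ n
        exact ⟨b', hb'⟩
      have h := LinearMap.lift_rank_le_of_surjective _ hsurj
      exact Cardinal.lift_le_aleph0.1 (h.trans (Cardinal.lift_le_aleph0.2 hB'rank))
    have hrank : Module.rank ℂ (Module.End B' M') ≤ ℵ₀ := by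
      refine le_trans ?_ hM'rank
      have hinj : Function.Injective (fun φ : Module.End B' M' => φ n₀) := by
        intro φ ψ h
        by_contra hne2
        have hd : φ - ψ ≠ 0 := sub_ne_zero.2 hne2
        have hinj2 := LinearMap.injective_of_ne_zero hd
        have h0 : (φ - ψ) n₀ = 0 := by
          simp only [LinearMap.sub_apply, sub_eq_zero]
          exact h
        exact hn₀ (hinj2 (by rw [h0, map_zero]))
      exact LinearMap.rank_le_of_injective
        { toFun := fun φ : Module.End B' M' => φ n₀
          map_add' := fun f g => rfl
          map_smul' := fun c f => rfl } hinj
    have hcomm : ∀ φ : Module.End B' M', ∃ c : ℂ, ∀ n : M', φ n = c • n := by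
      intro φ
      obtain ⟨c, hc⟩ := dixmier hdr hrank φ
      exact ⟨c, fun n => by rw [hc]; exact Module.algebraMap_end_apply ℂ B' M' c n⟩
    -- find a nonzero pure tensor in `P`
    set bas' := Module.Basis.ofVectorSpace ℂ M' with hbas'
    obtain ⟨f, hfz⟩ := rep_lemma bas' z
    have hf0 : f ≠ 0 := by
      rintro rfl
      rw [Finsupp.sum_zero_index] at hfz
      exact hz0 hfz
    obtain ⟨j, hj⟩ := Finsupp.support_nonempty_iff.2 hf0
    set t := (f.support.erase j).image (fun i => bas' i) with ht
    have hxnot : bas' j ∉ Submodule.span ℂ (t : Set M') := by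
      rw [ht, Finset.coe_image]
      exact bas'.linearIndependent.notMem_span_image (by simp)
    obtain ⟨a', ha't, ha'j⟩ := density hcomm t (bas' j) hxnot
    have hw : LinearMap.lTensor M (DistribMulAction.toLinearMap ℂ M' a') z
        = f j ⊗ₜ[ℂ] (a' • bas' j) := by
      rw [hfz, Finsupp.sum, map_sum]
      rw [Finset.sum_eq_single_of_mem j hj (fun i hi hij => ?_)]
      · rw [LinearMap.lTensor_tmul]
        rfl
      · rw [LinearMap.lTensor_tmul]
        have h0 : a' • bas' i = 0 :=
          ha't (bas' i) (Finset.mem_image.2 ⟨i, Finset.mem_erase.2 ⟨hij, hi⟩, rfl⟩)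
        show (f i) ⊗ₜ[ℂ] (a' • bas' i) = 0
        rw [h0, TensorProduct.tmul_zero]
    have hwP : f j ⊗ₜ[ℂ] (a' • bas' j) ∈ P := hw ▸ hinv2 a' z hzP
    have hfj : f j ≠ 0 := Finsupp.mem_support_iff.1 hj
    set n₁ := a' • bas' j with hn₁def
    have hpure1 : ∀ m : M, m ⊗ₜ[ℂ] n₁ ∈ P := by
      intro m
      obtain ⟨b, hb⟩ := IsSimpleModule.toSpanSingleton_surjective B hfj m
      rw [LinearMap.toSpanSingleton_apply] at hb
      have h := hinv1 b _ hwP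
      rwa [LinearMap.rTensor_tmul,
        show (DistribMulAction.toLinearMap ℂ M b) (f j) = b • f j from rfl, hb] at h
    have hpure : ∀ (m : M) (n : M'), m ⊗ₜ[ℂ] n ∈ P := by
      intro m n
      obtain ⟨b', hb'⟩ := IsSimpleModule.toSpanSingleton_surjective B' ha'j n
      rw [LinearMap.toSpanSingleton_apply] at hb'
      have h := hinv2 b' _ (hpure1 m)
      rwa [LinearMap.lTensor_tmul,
        show (DistribMulAction.toLinearMap ℂ M' b') n₁ = b' • n₁ from rfl, hb'] at h
    rw [eq_top_iff, ← TensorProduct.span_tmul_eq_top ℂ M M', Submodule.span_le]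
    rintro _ ⟨m, n, rfl⟩
    exact hpure m n
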